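/- Let K be a positive integer, μ_1,…,μ_R and δ_1,…,δ_L positive reals, and σ_𝓘² > 0. Then lim_{ρ → ∞} Σ_{j=1}^{R} Σ_{i=1}^{L} μ_j·δ_i·(1 + ρK·μ_j·δ_i·σ_𝓘²)/(1 + ρK·μ_j·δ_i + ρK·μ_j·δ_i·σ_𝓘²) = (σ_𝓘²/(1 + σ_𝓘²))·(Σ_{j=1}^{R} μ_j)·(Σ_{i=1}^{L} δ_i), where the limit is over real ρ tending to infinity. (At high SNR the optimal centralized LMMSE MSE under pilot contamination converges to (σ_𝓘²/(1+σ_𝓘²))·trace(R_array)·trace(R_tap), independent of the number of pilots K.) -/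

import Mathlib

open Filter

lemma term_limit (c a σ : ℝ) (ha : 0 < a) (hσ : 0 < σ) :
    Tendsto (fun ρ : ℝ => c * (1 + ρ * a * σ) / (1 + ρ * a + ρ * a * σ)) atTop
      (nhds (c * (σ / (1 + σ)))) := by
  have haσ : a + a * σ ≠ 0 := by positivity
  have h1 : Tendsto (fun ρ : ℝ => (c * (ρ⁻¹ + a * σ)) / (ρ⁻¹ + a + a * σ)) atTop
      (nhds ((c * (0 + a * σ)) / (0 + a + a * σ))) := by
    apply Tendsto.div
    · exact (tendsto_const_nhds.mul (tendsto_inv_atTop_zero.add tendsto_const_nhds))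
    · exact (tendsto_inv_atTop_zero.add tendsto_const_nhds).add tendsto_const_nhds
    · simpa using haσ
  have heq : (c * (0 + a * σ)) / (0 + a + a * σ) = c * (σ / (1 + σ)) := by
    field_simp
    ring
  rw [heq] at h1
  refine h1.congr' ?_
  filter_upwards [eventually_gt_atTop (0 : ℝ)] with ρ hρ
  have hden : 0 < 1 + ρ * a + ρ * a * σ := by positivity
  field_simp

/-- High-SNR limit of the optimal centralized LMMSE MSE under pilot contamination:
`Σ_j Σ_i μ_jδ_i(1 + ρKμ_jδ_iσ_𝓘²)/(1 + ρKμ_jδ_i + ρKμ_jδ_iσ_𝓘²)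
  → (σ_𝓘²/(1+σ_𝓘²))·(Σ_j μ_j)·(Σ_i δ_i)` as the SNR `ρ → ∞`. -/
theorem olmmse_pc_high_snr_limit {R L : ℕ} (K : ℕ) (hK : 0 < K)
    (μ : Fin R → ℝ) (hμ : ∀ j, 0 < μ j)
    (δ : Fin L → ℝ) (hδ : ∀ i, 0 < δ i) (σI2 : ℝ) (hσI : 0 < σI2) :
    Tendsto (fun ρ : ℝ => ∑ j, ∑ i, μ j * δ i * (1 + ρ * K * (μ j * δ i) * σI2) /
        (1 + ρ * K * (μ j * δ i) + ρ * K * (μ j * δ i) * σI2)) atTop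
      (nhds ((σI2 / (1 + σI2)) * (∑ j, μ j) * ∑ i, δ i)) := by
  have hrhs : (σI2 / (1 + σI2)) * (∑ j, μ j) * ∑ i, δ i
      = ∑ j, ∑ i, (μ j * δ i) * (σI2 / (1 + σI2)) := by
    simp only [Finset.mul_sum, Finset.sum_mul]
    rw [Finset.sum_comm]
    exact Finset.sum_congr rfl fun j _ => Finset.sum_congr rfl fun i _ => by ring
  rw [hrhs]
  apply tendsto_finset_sum
  intro j _
  apply tendsto_finset_sum
  intro i _
  have hK' : (0:ℝ) < K := by exact_mod_cast hK
  have ha : 0 < (K:ℝ) * (μ j * δ i) := mul_pos hK' (mul_pos (hμ j) (hδ i))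
  have := term_limit (μ j * δ i) ((K:ℝ) * (μ j * δ i)) σI2 ha hσI
  refine this.congr fun ρ => ?_
  ring_nf
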